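/- Let F ⊆ 2^[n] be a family such that |A \ B| ∈ {1, 2, ..., k} for all distinct ordered pairs A, B ∈ F. Then |F| ≤ ∑_{i=0}^{k} C(n, i) − |S|, where S is the set of k-element subsets of [n] not contained in any member of F. -/

import Mathlib

set_option synthInstance.maxHeartbeats 1000000
set_option maxHeartbeats 1000000

open Finset Submodule

namespace Stmt19

variable {n : ℕ}

/-- The "monomial" function: indicator of `T ⊆ X`. -/
def mon (T : Finset (Fin n)) : Finset (Fin n) → ℝ :=
  fun X => if T ⊆ X then 1 else 0

lemma mon_mul (T T' : Finset (Fin n)) : mon T * mon T' = mon (T ∪ T') := by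
  funext X
  simp only [mon, Pi.mul_apply, union_subset_iff]
  by_cases h : T ⊆ X <;> by_cases h' : T' ⊆ X <;> simp [h, h']

/-- The monomials of degree at most `d`, as a finite set of functions. -/
noncomputable def monSet (n d : ℕ) : Finset (Finset (Fin n) → ℝ) :=
  (Finset.univ.powerset.filter fun T : Finset (Fin n) => T.card ≤ d).image mon

/-- Span of monomials of degree at most `d`. -/
noncomputable def W (n d : ℕ) : Submodule ℝ (Finset (Fin n) → ℝ) :=
  span ℝ ((monSet n d : Finset (Finset (Fin n) → ℝ)) : Set (Finset (Fin n) → ℝ))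

lemma mem_monSet_iff {d : ℕ} {x : Finset (Fin n) → ℝ} :
    x ∈ monSet n d ↔ ∃ T : Finset (Fin n), T.card ≤ d ∧ mon T = x := by
  classical
  simp only [monSet, Finset.mem_image, mem_filter, mem_powerset]
  constructor
  · rintro ⟨T, ⟨-, hT⟩, rfl⟩; exact ⟨T, hT, rfl⟩
  · rintro ⟨T, hT, rfl⟩; exact ⟨T, ⟨subset_univ T, hT⟩, rfl⟩

lemma mon_mem_W {T : Finset (Fin n)} {d : ℕ} (h : T.card ≤ d) : mon T ∈ W n d :=
  subset_span (by simpa using mem_monSet_iff.mpr ⟨T, h, rfl⟩)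

lemma one_mem_W {d : ℕ} : (1 : Finset (Fin n) → ℝ) ∈ W n d := by
  have : (1 : Finset (Fin n) → ℝ) = mon ∅ := by
    funext X; simp [mon]
  rw [this]
  exact mon_mem_W (Nat.zero_le d)

lemma mon_mul_mem_W {a b : ℕ} {T : Finset (Fin n)} (hT : T.card ≤ a)
    {v : Finset (Fin n) → ℝ} (hv : v ∈ W n b) : mon T * v ∈ W n (a + b) := by
  induction hv using Submodule.span_induction with
  | mem y hy =>
    obtain ⟨T', hT', rfl⟩ := mem_monSet_iff.mp (by simpa using hy)
    rw [mon_mul]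
    exact mon_mem_W (le_trans (card_union_le _ _) (add_le_add hT hT'))
  | zero => rw [mul_zero]; exact zero_mem _
  | add y z _ _ hy hz => rw [mul_add]; exact add_mem hy hz
  | smul c y _ hy => rw [mul_smul_comm]; exact smul_mem _ _ hy

lemma mul_mem_W {a b : ℕ} {u v : Finset (Fin n) → ℝ} (hu : u ∈ W n a) (hv : v ∈ W n b) :
    u * v ∈ W n (a + b) := by
  induction hu using Submodule.span_induction with
  | mem x hx =>
    obtain ⟨T, hT, rfl⟩ := mem_monSet_iff.mp (by simpa using hx)
    exact mon_mul_mem_W hT hv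
  | zero => rw [zero_mul]; exact zero_mem _
  | add x y _ _ hx hy => rw [add_mul]; exact add_mem hx hy
  | smul c x _ hx => rw [smul_mul_assoc]; exact smul_mem _ _ hx

lemma prod_mem_W {ι : Type*} (s : Finset ι) (f : ι → (Finset (Fin n) → ℝ))
    (h : ∀ i ∈ s, f i ∈ W n 1) : (∏ i ∈ s, f i) ∈ W n s.card := by
  classical
  induction s using Finset.cons_induction with
  | empty => simpa using one_mem_W
  | cons i s hi ih =>
    rw [Finset.prod_cons, Finset.card_cons]
    have h1 := h i (Finset.mem_cons_self i s)
    have h2 := ih fun j hj => h j (Finset.mem_cons.mpr (Or.inr hj))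
    have := mul_mem_W h1 h2
    rwa [add_comm] at this

lemma linform_mem_W (A : Finset (Fin n)) (c : ℝ) :
    (fun X : Finset (Fin n) => ((X ∩ A).card : ℝ) - c) ∈ W n 1 := by
  classical
  have key : (fun X : Finset (Fin n) => ((X ∩ A).card : ℝ) - c)
      = (∑ i ∈ A, mon {i}) - c • mon ∅ := by
    funext X
    simp only [Pi.sub_apply, Pi.smul_apply, Finset.sum_apply, mon, smul_eq_mul]
    have h2 : (∑ i ∈ A, if ({i} : Finset (Fin n)) ⊆ X then (1:ℝ) else 0)
        = ∑ i ∈ A, if i ∈ X then (1:ℝ) else 0 :=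
      Finset.sum_congr rfl fun i _ => by simp [Finset.singleton_subset_iff]
    rw [h2, Finset.sum_boole, Finset.filter_mem_eq_inter, Finset.inter_comm A X]
    simp
  rw [key]
  exact sub_mem (sum_mem fun i _ => mon_mem_W (by simp))
    (smul_mem _ _ (mon_mem_W (by simp)))

/-- The polynomial associated to a member `A` of the family. -/
noncomputable def fA (k : ℕ) (A : Finset (Fin n)) : Finset (Fin n) → ℝ :=
  ∏ j ∈ Finset.range k, fun X : Finset (Fin n) =>
    ((X ∩ A).card : ℝ) - ((A.card : ℝ) - (j + 1))

lemma fA_mem_W (k : ℕ) (A : Finset (Fin n)) : fA k A ∈ W n k := by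
  have := prod_mem_W (Finset.range k)
    (fun j => fun X : Finset (Fin n) => ((X ∩ A).card : ℝ) - ((A.card : ℝ) - (j + 1)))
    (fun j _ => linform_mem_W A _)
  rwa [Finset.card_range] at this

lemma fA_apply (k : ℕ) (A X : Finset (Fin n)) :
    fA k A X = ∏ j ∈ Finset.range k, (((X ∩ A).card : ℝ) - ((A.card : ℝ) - (j + 1))) := by
  rw [fA, Finset.prod_apply]

lemma fA_self_ne_zero (k : ℕ) (A : Finset (Fin n)) : fA k A A ≠ 0 := by
  rw [fA_apply]
  have : ∀ j ∈ Finset.range k,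
      (((A ∩ A).card : ℝ) - ((A.card : ℝ) - (j + 1))) = (j : ℝ) + 1 := by
    intro j _
    rw [Finset.inter_self]
    ring
  rw [Finset.prod_congr rfl this]
  refine Finset.prod_ne_zero_iff.mpr fun j _ => ?_
  positivity

lemma fA_vanish {k : ℕ} {A B : Finset (Fin n)} (h1 : 1 ≤ (A \ B).card)
    (h2 : (A \ B).card ≤ k) : fA k A B = 0 := by
  rw [fA_apply]
  apply Finset.prod_eq_zero (i := (A \ B).card - 1)
  · rw [Finset.mem_range]; omega
  · have hc : ((A ∩ B).card : ℝ) + ((A \ B).card : ℝ) = (A.card : ℝ) := by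
      exact_mod_cast congrArg (Nat.cast (R := ℝ)) (Finset.card_inter_add_card_sdiff A B)
    have hcast : (((A \ B).card - 1 : ℕ) : ℝ) = ((A \ B).card : ℝ) - 1 := by
      have := Nat.cast_sub (R := ℝ) h1
      simpa using this
    have hBA : (B ∩ A).card = (A ∩ B).card := by rw [Finset.inter_comm]
    rw [hBA, hcast]
    push_cast at hc ⊢
    linarith

end Stmt19

open Stmt19 in
theorem stmt_19 (n k : ℕ) (F : Finset (Finset (Fin n)))
    (hdiff : ∀ A ∈ F, ∀ B ∈ F, A ≠ B → 1 ≤ (A \ B).card ∧ (A \ B).card ≤ k) :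
    F.card ≤ ∑ i ∈ Finset.range (k + 1), n.choose i -
      ((Finset.powersetCard k (Finset.univ : Finset (Fin n))).filter
        (fun T => ∀ A ∈ F, ¬ T ⊆ A)).card := by
  classical
  set S := (Finset.powersetCard k (Finset.univ : Finset (Fin n))).filter
      (fun T => ∀ A ∈ F, ¬ T ⊆ A) with hS
  -- the index type
  let ι := {A // A ∈ F} ⊕ {T // T ∈ S}
  let v : ι → (Finset (Fin n) → ℝ) := Sum.elim (fun A => fA k A.1) (fun T => mon T.1)
  have hScard : ∀ T : {T // T ∈ S}, (T.1 : Finset (Fin n)).card = k := by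
    intro T
    have := (Finset.mem_filter.mp T.2).1
    exact (Finset.mem_powersetCard.mp this).2
  have hSnotsub : ∀ T : {T // T ∈ S}, ∀ A ∈ F, ¬ T.1 ⊆ A := fun T =>
    (Finset.mem_filter.mp T.2).2
  have hvW : ∀ i : ι, v i ∈ W n k := by
    rintro (A | T)
    · exact fA_mem_W k A.1
    · exact mon_mem_W (le_of_eq (hScard T))
  -- linear independence
  have hli : LinearIndependent ℝ v := by
    rw [Fintype.linearIndependent_iff]
    intro g hg
    have hg' : ∀ X : Finset (Fin n), ∑ i : ι, g i * v i X = 0 := by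
      intro X
      have := congrFun hg X
      simpa [Finset.sum_apply] using this
    -- first, all inl coefficients vanish
    have h1 : ∀ A : {A // A ∈ F}, g (Sum.inl A) = 0 := by
      intro A₀
      have hx := hg' A₀.1
      rw [Fintype.sum_sum_type] at hx
      have hr : ∀ T : {T // T ∈ S}, g (Sum.inr T) * v (Sum.inr T) A₀.1 = 0 := by
        intro T
        have : v (Sum.inr T) A₀.1 = 0 := by
          simp only [v, Sum.elim_inr, mon]
          exact if_neg (hSnotsub T A₀.1 A₀.2)
        rw [this, mul_zero]
      rw [Finset.sum_congr rfl (fun T _ => hr T), Finset.sum_const_zero, add_zero] at hx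
      have hl : ∑ A : {A // A ∈ F}, g (Sum.inl A) * v (Sum.inl A) A₀.1
          = g (Sum.inl A₀) * v (Sum.inl A₀) A₀.1 := by
        apply Finset.sum_eq_single_of_mem A₀ (Finset.mem_univ _)
        intro A _ hA
        have hne : A.1 ≠ A₀.1 := fun h => hA (Subtype.ext h)
        have := hdiff A.1 A.2 A₀.1 A₀.2 hne
        have : v (Sum.inl A) A₀.1 = 0 := fA_vanish this.1 this.2
        rw [this, mul_zero]
      rw [hl] at hx
      have hne : v (Sum.inl A₀) A₀.1 ≠ 0 := fA_self_ne_zero k A₀.1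
      exact (mul_eq_zero.mp hx).resolve_right hne
    -- then, all inr coefficients vanish
    have h2 : ∀ T : {T // T ∈ S}, g (Sum.inr T) = 0 := by
      intro T₀
      have hx := hg' T₀.1
      rw [Fintype.sum_sum_type] at hx
      have hlz : ∀ A : {A // A ∈ F}, g (Sum.inl A) * v (Sum.inl A) T₀.1 = 0 := by
        intro A; rw [h1 A, zero_mul]
      rw [Finset.sum_congr rfl (fun A _ => hlz A), Finset.sum_const_zero, zero_add] at hx
      have hr : ∑ T : {T // T ∈ S}, g (Sum.inr T) * v (Sum.inr T) T₀.1
          = g (Sum.inr T₀) * v (Sum.inr T₀) T₀.1 := by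
        apply Finset.sum_eq_single_of_mem T₀ (Finset.mem_univ _)
        intro T _ hT
        have : v (Sum.inr T) T₀.1 = 0 := by
          simp only [v, Sum.elim_inr, mon]
          apply if_neg
          intro hsub
          apply hT
          apply Subtype.ext
          apply Finset.eq_of_subset_of_card_le hsub
          rw [hScard T, hScard T₀]
        rw [this, mul_zero]
      rw [hr] at hx
      have hone : v (Sum.inr T₀) T₀.1 = 1 := by
        simp only [v, Sum.elim_inr, mon]
        exact if_pos (Finset.Subset.refl _)
      rw [hone, mul_one] at hx
      exact hx
    rintro (A | T)
    · exact h1 A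
    · exact h2 T
  -- dimension bound
  haveI : Module.Finite ℝ (W n k) :=
    FiniteDimensional.span_of_finite ℝ (Finset.finite_toSet _)
  let v' : ι → (W n k) := fun i => ⟨v i, hvW i⟩
  have hli' : LinearIndependent ℝ v' := by
    apply LinearIndependent.of_comp (W n k).subtype
    convert hli
    rfl
  have hdim : Fintype.card ι ≤ Module.finrank ℝ (W n k) :=
    hli'.fintype_card_le_finrank
  have hfin : Module.finrank ℝ (W n k) ≤
      (Finset.univ.powerset.filter fun T : Finset (Fin n) => T.card ≤ k).card := by
    classical
    have h1 : (monSet n k).card ≤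
        (Finset.univ.powerset.filter fun T : Finset (Fin n) => T.card ≤ k).card := by
      simp only [monSet]
      exact Finset.card_image_le
    refine le_trans ?_ h1
    have := finrank_span_finset_le_card (R := ℝ) (monSet n k)
    rw [Set.finrank] at this
    exact this
  have hcount : (Finset.univ.powerset.filter fun T : Finset (Fin n) => T.card ≤ k).card
      = ∑ i ∈ Finset.range (k + 1), n.choose i := by
    have heq : (Finset.univ.powerset.filter fun T : Finset (Fin n) => T.card ≤ k)
        = (Finset.range (k + 1)).biUnion
          (fun i => Finset.powersetCard i (Finset.univ : Finset (Fin n))) := by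
      ext T
      simp only [Finset.mem_filter, Finset.mem_powerset, Finset.mem_biUnion,
        Finset.mem_range, Finset.mem_powersetCard, Nat.lt_succ_iff]
      constructor
      · rintro ⟨hsub, hcard⟩; exact ⟨T.card, hcard, hsub, rfl⟩
      · rintro ⟨i, hi, hsub, rfl⟩; exact ⟨hsub, hi⟩
    rw [heq, Finset.card_biUnion]
    · apply Finset.sum_congr rfl
      intro i _
      rw [Finset.card_powersetCard, Finset.card_univ, Fintype.card_fin]
    · intro i _ j _ hij
      exact Finset.pairwise_disjoint_powersetCard _ hij
  have hcardι : Fintype.card ι = F.card + S.card := by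
    simp [ι, Fintype.card_sum, Fintype.card_coe]
  have : F.card + S.card ≤ ∑ i ∈ Finset.range (k + 1), n.choose i := by
    rw [← hcardι, ← hcount]
    exact le_trans hdim hfin
  exact Nat.le_sub_of_add_le this
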